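/- In the one-hidden-layer ReLU ANN setting with constant target α, for a gradient descent sequence Θ_{n+1} = Θ_n − γ G(Θ_n) with step size γ ∈ (0, (4V(Θ_0)+2)^{-1}], it holds for all n ∈ ℕ_0 that V(Θ_{n+1}) − V(Θ_n) ≤ −4γ L_∞(Θ_n) ≤ 0. -/

import Mathlib

open MeasureTheory

noncomputable section

/-- weight parameters -/
def wp (H : ℕ) (φ : EuclideanSpace ℝ (Fin (3*H+1))) (j : Fin H) : ℝ := φ ⟨j.1, by omega⟩
/-- bias parameters -/
def bp (H : ℕ) (φ : EuclideanSpace ℝ (Fin (3*H+1))) (j : Fin H) : ℝ := φ ⟨H + j.1, by omega⟩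
/-- outer weight parameters -/
def vp (H : ℕ) (φ : EuclideanSpace ℝ (Fin (3*H+1))) (j : Fin H) : ℝ := φ ⟨2*H + j.1, by omega⟩
/-- output bias -/
def cp (H : ℕ) (φ : EuclideanSpace ℝ (Fin (3*H+1))) : ℝ := φ ⟨3*H, by omega⟩

/-- realization of the one-hidden-layer ReLU network -/
def realization (H : ℕ) (φ : EuclideanSpace ℝ (Fin (3*H+1))) (x : ℝ) : ℝ :=
  cp H φ + ∑ j : Fin H, vp H φ j * max (wp H φ j * x + bp H φ j) 0

/-- risk with constant target α -/
def risk (H : ℕ) (α : ℝ) (φ : EuclideanSpace ℝ (Fin (3*H+1))) : ℝ :=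
  ∫ y in (0:ℝ)..1, (realization H φ y - α)^2

/-- activity interval I_j^φ -/
def actSet (H : ℕ) (φ : EuclideanSpace ℝ (Fin (3*H+1))) (j : Fin H) : Set ℝ :=
  {x | x ∈ Set.Icc (0:ℝ) 1 ∧ 0 < wp H φ j * x + bp H φ j}

/-- generalized gradient G -/
def grad (H : ℕ) (α : ℝ) (φ : EuclideanSpace ℝ (Fin (3*H+1))) :
    EuclideanSpace ℝ (Fin (3*H+1)) := WithLp.toLp 2 <| fun i =>
  if h : i.1 < H then
    2 * vp H φ ⟨i.1, h⟩ * ∫ x in actSet H φ ⟨i.1, h⟩, x * (realization H φ x - α)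
  else if h2 : i.1 < 2*H then
    2 * vp H φ ⟨i.1 - H, by omega⟩ * ∫ x in actSet H φ ⟨i.1 - H, by omega⟩, (realization H φ x - α)
  else if h3 : i.1 < 3*H then
    2 * ∫ x in (0:ℝ)..1,
      max (wp H φ ⟨i.1 - 2*H, by omega⟩ * x + bp H φ ⟨i.1 - 2*H, by omega⟩) 0 * (realization H φ x - α)
  else 2 * ∫ x in (0:ℝ)..1, (realization H φ x - α)

/-- Lyapunov function V -/
def lyap (H : ℕ) (α : ℝ) (φ : EuclideanSpace ℝ (Fin (3*H+1))) : ℝ :=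
  ‖φ‖^2 + (cp H φ - 2*α)^2

-- sum splitting
lemma sum_split (H : ℕ) (f : Fin (3*H+1) → ℝ) :
    ∑ i, f i = ((∑ j : Fin H, f ⟨j.1, by omega⟩) + (∑ j : Fin H, f ⟨H + j.1, by omega⟩)
      + (∑ j : Fin H, f ⟨2*H + j.1, by omega⟩)) + f ⟨3*H, by omega⟩ := by
  set g : ℕ → ℝ := fun i => if h : i < 3*H+1 then f ⟨i, h⟩ else 0 with hg
  have h1 : ∑ i, f i = ∑ i ∈ Finset.range (3*H+1), g i := by
    rw [← Fin.sum_univ_eq_sum_range]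
    exact Finset.sum_congr rfl fun i _ => by simp only [hg, dif_pos i.isLt, Fin.eta]
  have e : 3*H+1 = H + (H + (H + 1)) := by omega
  have h2 : ∑ i ∈ Finset.range (3*H+1), g i = ∑ i ∈ Finset.range (H + (H + (H + 1))), g i := by
    rw [e]
  have eA : ∑ i ∈ Finset.range H, g i = ∑ j : Fin H, f ⟨j.1, by omega⟩ := by
    rw [← Fin.sum_univ_eq_sum_range]
    refine Finset.sum_congr rfl fun i _ => ?_
    have hlt : (i:ℕ) < 3*H+1 := by have := i.isLt; omega
    exact dif_pos hlt
  have eB : ∑ i ∈ Finset.range H, g (H + i) = ∑ j : Fin H, f ⟨H + j.1, by omega⟩ := by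
    rw [← Fin.sum_univ_eq_sum_range]
    refine Finset.sum_congr rfl fun i _ => ?_
    have hlt : H + (i:ℕ) < 3*H+1 := by have := i.isLt; omega
    exact dif_pos hlt
  have eC : ∑ i ∈ Finset.range H, g (H + (H + i)) = ∑ j : Fin H, f ⟨2*H + j.1, by omega⟩ := by
    rw [← Fin.sum_univ_eq_sum_range]
    refine Finset.sum_congr rfl fun i _ => ?_
    have hlt : H + (H + (i:ℕ)) < 3*H+1 := by have := i.isLt; omega
    have h5 : g (H + (H + (i:ℕ))) = f ⟨H + (H + (i:ℕ)), hlt⟩ := dif_pos hlt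
    rw [h5]
    congr 1
    exact Fin.ext (by simp; omega)
  have eD : g (H + (H + (H + 0))) = f ⟨3*H, by omega⟩ := by
    have hlt : H + (H + (H + 0)) < 3*H+1 := by omega
    have h5 : g (H + (H + (H + 0))) = f ⟨H + (H + (H + 0)), hlt⟩ := dif_pos hlt
    rw [h5]
    congr 1
    exact Fin.ext (by simp; omega)
  rw [h1, h2, Finset.sum_range_add, Finset.sum_range_add, Finset.sum_range_add,
    Finset.sum_range_one, eA, eB, eC, eD]
  ring

lemma grad_w (H : ℕ) (α : ℝ) (φ : EuclideanSpace ℝ (Fin (3*H+1))) (j : Fin H) :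
    grad H α φ ⟨j.1, by omega⟩
      = 2 * vp H φ j * ∫ x in actSet H φ j, x * (realization H φ x - α) := by
  simp only [grad, WithLp.ofLp_toLp, dif_pos j.isLt, Fin.eta]

lemma grad_b (H : ℕ) (α : ℝ) (φ : EuclideanSpace ℝ (Fin (3*H+1))) (j : Fin H) :
    grad H α φ ⟨H + j.1, by omega⟩
      = 2 * vp H φ j * ∫ x in actSet H φ j, (realization H φ x - α) := by
  have h1 : ¬ (H + j.1 < H) := by omega
  have h2 : H + j.1 < 2*H := by have := j.isLt; omega
  simp only [grad, WithLp.ofLp_toLp, dif_neg h1, dif_pos h2]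
  have h3 : (⟨H + j.1 - H, by omega⟩ : Fin H) = j := Fin.ext (by simp)
  rw [h3]

lemma grad_v (H : ℕ) (α : ℝ) (φ : EuclideanSpace ℝ (Fin (3*H+1))) (j : Fin H) :
    grad H α φ ⟨2*H + j.1, by omega⟩
      = 2 * ∫ x in (0:ℝ)..1,
          max (wp H φ j * x + bp H φ j) 0 * (realization H φ x - α) := by
  have h1 : ¬ (2*H + j.1 < H) := by omega
  have h2 : ¬ (2*H + j.1 < 2*H) := by omega
  have h3 : 2*H + j.1 < 3*H := by have := j.isLt; omega
  simp only [grad, WithLp.ofLp_toLp, dif_neg h1, dif_neg h2, dif_pos h3]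
  have h4 : (⟨2*H + j.1 - 2*H, by omega⟩ : Fin H) = j := Fin.ext (by simp)
  rw [h4]

lemma grad_c (H : ℕ) (α : ℝ) (φ : EuclideanSpace ℝ (Fin (3*H+1))) :
    grad H α φ ⟨3*H, by omega⟩ = 2 * ∫ x in (0:ℝ)..1, (realization H φ x - α) := by
  have h1 : ¬ (3*H < H) := by omega
  have h2 : ¬ (3*H < 2*H) := by omega
  have h3 : ¬ (3*H < 3*H) := by omega
  simp only [grad, WithLp.ofLp_toLp, dif_neg h1, dif_neg h2, dif_neg h3]

lemma cont_realization (H : ℕ) (φ : EuclideanSpace ℝ (Fin (3*H+1))) :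
    Continuous (realization H φ) := by
  unfold realization
  exact continuous_const.add (continuous_finset_sum _ fun j _ =>
    continuous_const.mul (((continuous_const.mul continuous_id).add continuous_const).max
      continuous_const))

lemma act_eq (H : ℕ) (φ : EuclideanSpace ℝ (Fin (3*H+1))) (j : Fin H) :
    actSet H φ j = Set.Icc (0:ℝ) 1 ∩ {x | 0 < wp H φ j * x + bp H φ j} := rfl

lemma meas_act (H : ℕ) (φ : EuclideanSpace ℝ (Fin (3*H+1))) (j : Fin H) :
    MeasurableSet (actSet H φ j) := by
  rw [act_eq]
  exact measurableSet_Icc.inter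
    ((isOpen_lt continuous_const (by continuity)).measurableSet)

lemma act_sub (H : ℕ) (φ : EuclideanSpace ℝ (Fin (3*H+1))) (j : Fin H) :
    actSet H φ j ⊆ Set.Icc (0:ℝ) 1 := fun _ hx => hx.1

lemma itg_eq (f : ℝ → ℝ) : ∫ x in (0:ℝ)..1, f x = ∫ x in Set.Icc (0:ℝ) 1, f x := by
  rw [intervalIntegral.integral_of_le zero_le_one, ← integral_Icc_eq_integral_Ioc]

/-- Cauchy-Schwarz style bound via AM-GM -/
lemma cs_abs {s : Set ℝ} (hs : MeasurableSet s) (hsub : s ⊆ Set.Icc (0:ℝ) 1) {f : ℝ → ℝ}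
    (hf : Continuous f) :
    (∫ x in s, |f x|)^2 ≤ ∫ x in Set.Icc (0:ℝ) 1, (f x)^2 := by
  set L := ∫ x in Set.Icc (0:ℝ) 1, (f x)^2 with hLdef
  have hL0 : 0 ≤ L := setIntegral_nonneg measurableSet_Icc (fun x _ => sq_nonneg _)
  have hint2 : IntegrableOn (fun x => (f x)^2) (Set.Icc (0:ℝ) 1) volume :=
    (hf.pow 2).integrableOn_Icc
  have hmono2 : ∫ x in s, (f x)^2 ≤ L :=
    setIntegral_mono_set hint2 (Filter.Eventually.of_forall fun x => sq_nonneg _)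
      (HasSubset.Subset.eventuallyLE hsub)
  have hμs : (volume s).toReal ≤ 1 := by
    have h1 : volume s ≤ volume (Set.Icc (0:ℝ) 1) := measure_mono hsub
    rw [Real.volume_Icc] at h1
    calc (volume s).toReal ≤ (ENNReal.ofReal (1-0)).toReal :=
          ENNReal.toReal_mono (by simp) h1
      _ = 1 := by simp
  have hμs0 : 0 ≤ (volume s).toReal := ENNReal.toReal_nonneg
  have hintabs : IntegrableOn (fun x => |f x|) s volume :=
    (hf.abs.integrableOn_Icc).mono_set hsub
  set t := ∫ x in s, |f x| with htdef
  have ht0 : 0 ≤ t := setIntegral_nonneg hs fun x _ => abs_nonneg _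
  have key : ∀ ε : ℝ, 0 < ε → t ≤ (ε + L/ε)/2 := by
    intro ε hε
    have hintc : IntegrableOn (fun _ : ℝ => ε) s volume :=
      (integrableOn_const_iff).mpr (Or.inr ((measure_mono hsub).trans_lt (by
        rw [Real.volume_Icc]; exact ENNReal.ofReal_lt_top)))
    have hintq : IntegrableOn (fun x => (f x)^2/ε) s volume :=
      (hint2.mono_set hsub).div_const ε
    have h1 : t ≤ ∫ x in s, (ε + (f x)^2/ε)/2 := by
      apply setIntegral_mono hintabs ((hintc.add hintq).div_const 2)
      intro x
      simp only [Pi.add_apply]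
      have h3 : 2*|f x| - ε ≤ (f x)^2 / ε := by
        rw [le_div_iff₀ hε]
        nlinarith [sq_nonneg (ε - |f x|), sq_abs (f x)]
      linarith
    have h2 : ∫ x in s, (ε + (f x)^2/ε)/2
        = ((volume s).toReal * ε + (∫ x in s, (f x)^2)/ε)/2 := by
      rw [integral_div, integral_add hintc hintq, integral_div, setIntegral_const,
        smul_eq_mul, measureReal_def]
    rw [h2] at h1
    have h4 : (volume s).toReal * ε ≤ 1 * ε := mul_le_mul_of_nonneg_right hμs hε.le
    have h5 : (∫ x in s, (f x)^2)/ε ≤ L/ε := by gcongr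
    linarith
  rcases eq_or_lt_of_le hL0 with hL | hL
  · have hteps : ∀ ε : ℝ, 0 < ε → t ≤ 0 + ε := by
      intro ε hε
      have h := key ε hε
      rw [← hL] at h
      simp only [zero_div] at h
      linarith
    have ht : t ≤ 0 := le_of_forall_pos_le_add hteps
    have hteq : t = 0 := le_antisymm ht ht0
    rw [hteq]
    simpa using hL0
  · have hst := key (Real.sqrt L) (Real.sqrt_pos.mpr hL)
    rw [Real.div_sqrt] at hst
    have htt : t ≤ Real.sqrt L := by linarith
    calc t^2 ≤ Real.sqrt L^2 := pow_le_pow_left₀ ht0 htt 2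
      _ = L := Real.sq_sqrt hL0

/-- squared set integral bound -/
lemma int_sq_le {s : Set ℝ} (hs : MeasurableSet s) (hsub : s ⊆ Set.Icc (0:ℝ) 1)
    {g f : ℝ → ℝ} (hf : Continuous f) (hg : IntegrableOn g s volume) {c : ℝ}
    (hbd : ∀ x ∈ s, |g x| ≤ c * |f x|) (hc : 0 ≤ c) :
    (∫ x in s, g x)^2 ≤ c^2 * ∫ x in Set.Icc (0:ℝ) 1, (f x)^2 := by
  have h1 : |∫ x in s, g x| ≤ ∫ x in s, |g x| := by
    simpa [Real.norm_eq_abs] using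
      norm_integral_le_integral_norm (μ := volume.restrict s) g
  have h2 : ∫ x in s, |g x| ≤ ∫ x in s, c * |f x| :=
    setIntegral_mono_on hg.abs
      (((hf.abs.integrableOn_Icc).mono_set hsub).const_mul c) hs hbd
  have h3 : ∫ x in s, c * |f x| = c * ∫ x in s, |f x| := integral_const_mul c _
  have h4 := cs_abs hs hsub hf
  have h5 : 0 ≤ ∫ x in s, |f x| := setIntegral_nonneg hs fun x _ => abs_nonneg _
  calc (∫ x in s, g x)^2 = |∫ x in s, g x|^2 := (sq_abs _).symm
    _ ≤ (c * ∫ x in s, |f x|)^2 := by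
        apply pow_le_pow_left₀ (abs_nonneg _)
        exact h1.trans (h2.trans_eq h3)
    _ = c^2 * (∫ x in s, |f x|)^2 := by ring
    _ ≤ c^2 * ∫ x in Set.Icc (0:ℝ) 1, (f x)^2 := by
        apply mul_le_mul_of_nonneg_left h4 (sq_nonneg c)

lemma act_split (H : ℕ) (α : ℝ) (φ : EuclideanSpace ℝ (Fin (3*H+1))) (j : Fin H) :
    ∫ x in Set.Icc (0:ℝ) 1, max (wp H φ j * x + bp H φ j) 0 * (realization H φ x - α)
    = ∫ x in actSet H φ j, (wp H φ j * x + bp H φ j) * (realization H φ x - α) := by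
  have hc := cont_realization H φ
  set t : Set ℝ := {x | 0 < wp H φ j * x + bp H φ j} with ht_def
  have ht : MeasurableSet t :=
    (isOpen_lt continuous_const (by continuity)).measurableSet
  have hint : IntegrableOn
      (fun x => max (wp H φ j * x + bp H φ j) 0 * (realization H φ x - α))
      (Set.Icc (0:ℝ) 1) volume :=
    ((((continuous_const.mul continuous_id).add continuous_const).max
        continuous_const).mul (hc.sub continuous_const)).integrableOn_Icc
  rw [← integral_inter_add_diff ht hint]
  have h1 : ∫ x in Set.Icc (0:ℝ) 1 ∩ t,
        max (wp H φ j * x + bp H φ j) 0 * (realization H φ x - α)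
      = ∫ x in actSet H φ j, (wp H φ j * x + bp H φ j) * (realization H φ x - α) := by
    rw [← act_eq]
    apply setIntegral_congr_fun (meas_act H φ j)
    intro x hx
    show max (wp H φ j * x + bp H φ j) 0 * (realization H φ x - α)
      = (wp H φ j * x + bp H φ j) * (realization H φ x - α)
    rw [max_eq_left hx.2.le]
  have h2 : ∫ x in Set.Icc (0:ℝ) 1 \ t,
        max (wp H φ j * x + bp H φ j) 0 * (realization H φ x - α) = 0 := by
    rw [setIntegral_congr_fun (measurableSet_Icc.diff ht) (g := fun _ => 0), integral_zero]
    intro x hx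
    have h3 : ¬ (0 < wp H φ j * x + bp H φ j) := hx.2
    show max (wp H φ j * x + bp H φ j) 0 * (realization H φ x - α) = 0
    rw [max_eq_right (not_lt.mp h3)]
    ring
  rw [h1, h2, add_zero]

lemma real_sub_c (H : ℕ) (φ : EuclideanSpace ℝ (Fin (3*H+1))) (x : ℝ) :
    ∑ j : Fin H, vp H φ j * max (wp H φ j * x + bp H φ j) 0
      = realization H φ x - cp H φ := by
  simp [realization]

lemma risk_eq (H : ℕ) (α : ℝ) (φ : EuclideanSpace ℝ (Fin (3*H+1))) :
    risk H α φ = ∫ x in Set.Icc (0:ℝ) 1, (realization H φ x - α)^2 := itg_eq _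

lemma risk_nonneg (H : ℕ) (α : ℝ) (φ : EuclideanSpace ℝ (Fin (3*H+1))) :
    0 ≤ risk H α φ := by
  rw [risk_eq]
  exact setIntegral_nonneg measurableSet_Icc fun x _ => sq_nonneg _

lemma inner_grad (H : ℕ) (α : ℝ) (φ : EuclideanSpace ℝ (Fin (3*H+1))) :
    (inner ℝ φ (grad H α φ) : ℝ)
      + (cp H φ - 2*α) * grad H α φ ⟨3*H, by omega⟩ = 4 * risk H α φ := by
  have hc := cont_realization H φ
  have hEc : Continuous (fun x => realization H φ x - α) := hc.sub continuous_const
  have hIE : IntegrableOn (fun x => realization H φ x - α) (Set.Icc (0:ℝ) 1) volume :=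
    hEc.integrableOn_Icc
  have hIxE : IntegrableOn (fun x => x * (realization H φ x - α)) (Set.Icc (0:ℝ) 1) volume :=
    (continuous_id.mul hEc).integrableOn_Icc
  have hinner : (inner ℝ φ (grad H α φ) : ℝ) = ∑ i, φ i * grad H α φ i := by
    simp [PiLp.inner_apply, RCLike.inner_apply, conj_trivial, mul_comm]
  rw [hinner, sum_split H (fun i => φ i * grad H α φ i)]
  rw [← Finset.sum_add_distrib, ← Finset.sum_add_distrib]
  have hWj : ∀ j : Fin H,
      φ (⟨j.1, by omega⟩ : Fin (3*H+1)) * grad H α φ ⟨j.1, by omega⟩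
      + φ ⟨H + j.1, by omega⟩ * grad H α φ ⟨H + j.1, by omega⟩
      + φ ⟨2*H + j.1, by omega⟩ * grad H α φ ⟨2*H + j.1, by omega⟩
      = 4 * (vp H φ j *
          ∫ x in Set.Icc (0:ℝ) 1, max (wp H φ j * x + bp H φ j) 0 * (realization H φ x - α)) := by
    intro j
    have hw : φ (⟨j.1, by omega⟩ : Fin (3*H+1)) = wp H φ j := rfl
    have hb : φ (⟨H + j.1, by omega⟩ : Fin (3*H+1)) = bp H φ j := rfl
    have hv : φ (⟨2*H + j.1, by omega⟩ : Fin (3*H+1)) = vp H φ j := rfl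
    rw [hw, hb, hv, grad_w, grad_b, grad_v,
      itg_eq (fun x => max (wp H φ j * x + bp H φ j) 0 * (realization H φ x - α))]
    have hM : ∫ x in Set.Icc (0:ℝ) 1,
          max (wp H φ j * x + bp H φ j) 0 * (realization H φ x - α)
        = wp H φ j * (∫ x in actSet H φ j, x * (realization H φ x - α))
          + bp H φ j * (∫ x in actSet H φ j, (realization H φ x - α)) := by
      have e1 : wp H φ j * ∫ x in actSet H φ j, x * (realization H φ x - α)
          = ∫ x in actSet H φ j, wp H φ j * (x * (realization H φ x - α)) :=
        (integral_const_mul _ _).symm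
      have e2 : bp H φ j * ∫ x in actSet H φ j, (realization H φ x - α)
          = ∫ x in actSet H φ j, bp H φ j * (realization H φ x - α) :=
        (integral_const_mul _ _).symm
      rw [act_split H α φ j, e1, e2,
        ← integral_add ((hIxE.mono_set (act_sub H φ j)).const_mul _)
          ((hIE.mono_set (act_sub H φ j)).const_mul _)]
      apply setIntegral_congr_fun (meas_act H φ j)
      intro x _
      show (wp H φ j * x + bp H φ j) * (realization H φ x - α)
        = wp H φ j * (x * (realization H φ x - α))
          + bp H φ j * (realization H φ x - α)
      ring
    rw [hM]
    ring
  rw [Finset.sum_congr rfl (fun j _ => hWj j), ← Finset.mul_sum]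
  have hsum : ∑ j : Fin H, vp H φ j *
      ∫ x in Set.Icc (0:ℝ) 1, max (wp H φ j * x + bp H φ j) 0 * (realization H φ x - α)
      = ∫ x in Set.Icc (0:ℝ) 1, (realization H φ x - cp H φ) * (realization H φ x - α) := by
    have hintj : ∀ j ∈ (Finset.univ : Finset (Fin H)), IntegrableOn
        (fun x => vp H φ j * (max (wp H φ j * x + bp H φ j) 0 * (realization H φ x - α)))
        (Set.Icc (0:ℝ) 1) volume := by
      intro j _
      exact ((continuous_const.mul ((((continuous_const.mul continuous_id).add
        continuous_const).max continuous_const).mul hEc))).integrableOn_Icc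
    calc ∑ j : Fin H, vp H φ j *
          ∫ x in Set.Icc (0:ℝ) 1, max (wp H φ j * x + bp H φ j) 0 * (realization H φ x - α)
        = ∑ j : Fin H, ∫ x in Set.Icc (0:ℝ) 1,
            vp H φ j * (max (wp H φ j * x + bp H φ j) 0 * (realization H φ x - α)) := by
          exact Finset.sum_congr rfl fun j _ => (integral_const_mul _ _).symm
      _ = ∫ x in Set.Icc (0:ℝ) 1, ∑ j : Fin H,
            vp H φ j * (max (wp H φ j * x + bp H φ j) 0 * (realization H φ x - α)) :=
          (integral_finset_sum Finset.univ hintj).symm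
      _ = ∫ x in Set.Icc (0:ℝ) 1, (realization H φ x - cp H φ) * (realization H φ x - α) := by
          apply integral_congr_ae
          apply Filter.Eventually.of_forall
          intro x
          show ∑ j : Fin H, vp H φ j *
              (max (wp H φ j * x + bp H φ j) 0 * (realization H φ x - α))
            = (realization H φ x - cp H φ) * (realization H φ x - α)
          rw [show ∑ j : Fin H, vp H φ j *
              (max (wp H φ j * x + bp H φ j) 0 * (realization H φ x - α))
            = (∑ j : Fin H, vp H φ j * max (wp H φ j * x + bp H φ j) 0)
                * (realization H φ x - α) from by rw [Finset.sum_mul]; congr 1; ext j; ring,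
            real_sub_c]
  rw [hsum, grad_c, itg_eq (fun x => realization H φ x - α), risk_eq]
  have hfin : (∫ x in Set.Icc (0:ℝ) 1, (realization H φ x - cp H φ) * (realization H φ x - α))
      + (cp H φ - α) * (∫ x in Set.Icc (0:ℝ) 1, (realization H φ x - α))
      = ∫ x in Set.Icc (0:ℝ) 1, (realization H φ x - α)^2 := by
    rw [← integral_const_mul, ← integral_add
      (f := fun x => (realization H φ x - cp H φ) * (realization H φ x - α))
      (((hc.sub continuous_const).mul hEc).integrableOn_Icc) (hIE.const_mul _)]
    apply integral_congr_ae
    apply Filter.Eventually.of_forall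
    intro x
    show (realization H φ x - cp H φ) * (realization H φ x - α)
      + (cp H φ - α) * (realization H φ x - α) = (realization H φ x - α)^2
    ring
  have hcc : φ (⟨3*H, by omega⟩ : Fin (3*H+1)) = cp H φ := rfl
  rw [hcc]
  linear_combination (4:ℝ) * hfin

lemma grad_bound (H : ℕ) (α : ℝ) (φ : EuclideanSpace ℝ (Fin (3*H+1))) :
    ‖grad H α φ‖^2 + (grad H α φ ⟨3*H, by omega⟩)^2
      ≤ (8 * lyap H α φ + 8) * risk H α φ := by
  have hc := cont_realization H φ
  have hEc : Continuous (fun x => realization H φ x - α) := hc.sub continuous_const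
  have hL0 : 0 ≤ risk H α φ := risk_nonneg H α φ
  have hR : risk H α φ = ∫ x in Set.Icc (0:ℝ) 1, (realization H φ x - α)^2 := risk_eq H α φ
  have hnorm : ‖grad H α φ‖^2 = ∑ i, (grad H α φ i)^2 := by
    rw [PiLp.norm_sq_eq_of_L2]
    exact Finset.sum_congr rfl fun i _ => by rw [Real.norm_eq_abs, sq_abs]
  rw [hnorm, sum_split H (fun i => (grad H α φ i)^2)]
  have hw : ∀ j : Fin H, (grad H α φ ⟨j.1, by omega⟩)^2
      ≤ 4 * ((vp H φ j)^2 * risk H α φ) := by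
    intro j
    rw [grad_w, hR]
    have h1 : (∫ x in actSet H φ j, x * (realization H φ x - α))^2
        ≤ 1^2 * ∫ x in Set.Icc (0:ℝ) 1, (realization H φ x - α)^2 := by
      apply int_sq_le (meas_act H φ j) (act_sub H φ j) hEc
        (((continuous_id.mul hEc).integrableOn_Icc).mono_set (act_sub H φ j))
      · intro x hx
        simp only [Pi.mul_apply, id_eq]
        have hx1 : x ∈ Set.Icc (0:ℝ) 1 := hx.1
        rw [abs_mul, one_mul]
        apply mul_le_of_le_one_left (abs_nonneg _)
        rw [abs_le]
        exact ⟨by linarith [hx1.1], hx1.2⟩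
      · norm_num
    nlinarith [sq_nonneg (vp H φ j)]
  have hb : ∀ j : Fin H, (grad H α φ ⟨H + j.1, by omega⟩)^2
      ≤ 4 * ((vp H φ j)^2 * risk H α φ) := by
    intro j
    rw [grad_b, hR]
    have h1 : (∫ x in actSet H φ j, (realization H φ x - α))^2
        ≤ 1^2 * ∫ x in Set.Icc (0:ℝ) 1, (realization H φ x - α)^2 := by
      apply int_sq_le (meas_act H φ j) (act_sub H φ j) hEc
        ((hEc.integrableOn_Icc).mono_set (act_sub H φ j))
      · intro x _
        rw [one_mul]
      · norm_num
    nlinarith [sq_nonneg (vp H φ j)]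
  have hv : ∀ j : Fin H, (grad H α φ ⟨2*H + j.1, by omega⟩)^2
      ≤ 8 * (((wp H φ j)^2 + (bp H φ j)^2) * risk H α φ) := by
    intro j
    rw [grad_v, itg_eq (fun x => max (wp H φ j * x + bp H φ j) 0 * (realization H φ x - α)), hR]
    have h1 : (∫ x in Set.Icc (0:ℝ) 1,
          max (wp H φ j * x + bp H φ j) 0 * (realization H φ x - α))^2
        ≤ (|wp H φ j| + |bp H φ j|)^2 * ∫ x in Set.Icc (0:ℝ) 1, (realization H φ x - α)^2 := by
      apply int_sq_le measurableSet_Icc subset_rfl hEc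
        (((((continuous_const.mul continuous_id).add continuous_const).max
          continuous_const).mul hEc).integrableOn_Icc)
      · intro x hx
        simp only [Pi.mul_apply, Pi.add_apply, id_eq]
        rw [abs_mul]
        apply mul_le_mul_of_nonneg_right _ (abs_nonneg _)
        have h2 : |max (wp H φ j * x + bp H φ j) 0| = max (wp H φ j * x + bp H φ j) 0 :=
          abs_of_nonneg (le_max_right _ _)
        rw [h2]
        apply max_le _ (by positivity)
        calc wp H φ j * x + bp H φ j ≤ |wp H φ j * x| + |bp H φ j| := by
              have := le_abs_self (wp H φ j * x)
              have := le_abs_self (bp H φ j)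
              linarith
          _ = |wp H φ j| * |x| + |bp H φ j| := by rw [abs_mul]
          _ ≤ |wp H φ j| * 1 + |bp H φ j| := by
              have hx1 : |x| ≤ 1 := by
                rw [abs_le]; exact ⟨by linarith [hx.1], hx.2⟩
              have := abs_nonneg (wp H φ j)
              nlinarith
          _ = |wp H φ j| + |bp H φ j| := by ring
      · positivity
    have h3 : (|wp H φ j| + |bp H φ j|)^2 ≤ 2 * ((wp H φ j)^2 + (bp H φ j)^2) := by
      nlinarith [sq_nonneg (|wp H φ j| - |bp H φ j|), sq_abs (wp H φ j), sq_abs (bp H φ j)]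
    have hRI : 0 ≤ ∫ x in Set.Icc (0:ℝ) 1, (realization H φ x - α)^2 := by rw [← hR]; exact hL0
    nlinarith [mul_le_mul_of_nonneg_right h3 hRI]
  have hcb : (grad H α φ ⟨3*H, by omega⟩)^2 ≤ 4 * risk H α φ := by
    rw [grad_c, itg_eq (fun x => realization H φ x - α), hR]
    have h1 : (∫ x in Set.Icc (0:ℝ) 1, (realization H φ x - α))^2
        ≤ 1^2 * ∫ x in Set.Icc (0:ℝ) 1, (realization H φ x - α)^2 := by
      apply int_sq_le measurableSet_Icc subset_rfl hEc (hEc.integrableOn_Icc)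
      · intro x _; rw [one_mul]
      · norm_num
    nlinarith
  have h₁ := Finset.sum_le_sum (s := Finset.univ) (fun j (_ : j ∈ Finset.univ) => hw j)
  have h₂ := Finset.sum_le_sum (s := Finset.univ) (fun j (_ : j ∈ Finset.univ) => hb j)
  have h₃ := Finset.sum_le_sum (s := Finset.univ) (fun j (_ : j ∈ Finset.univ) => hv j)
  have e₁ : ∑ j : Fin H, 4 * ((vp H φ j)^2 * risk H α φ)
      = 4 * ((∑ j : Fin H, (vp H φ j)^2) * risk H α φ) := by
    rw [Finset.sum_mul, Finset.mul_sum]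
    try exact Finset.sum_congr rfl fun j _ => by ring
  have e₃ : ∑ j : Fin H, 8 * (((wp H φ j)^2 + (bp H φ j)^2) * risk H α φ)
      = 8 * (((∑ j : Fin H, (wp H φ j)^2) + ∑ j : Fin H, (bp H φ j)^2) * risk H α φ) := by
    rw [add_mul, Finset.sum_mul, Finset.sum_mul, mul_add, Finset.mul_sum, Finset.mul_sum,
      ← Finset.sum_add_distrib]
    try exact Finset.sum_congr rfl fun j _ => by ring
  rw [e₁] at h₁ h₂
  rw [e₃] at h₃
  have hφn : ‖φ‖^2 = ((∑ j : Fin H, (wp H φ j)^2 + ∑ j : Fin H, (bp H φ j)^2)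
      + ∑ j : Fin H, (vp H φ j)^2) + (cp H φ)^2 := by
    have hn : ‖φ‖^2 = ∑ i, (φ i)^2 := by
      rw [PiLp.norm_sq_eq_of_L2]
      exact Finset.sum_congr rfl fun i _ => by rw [Real.norm_eq_abs, sq_abs]
    rw [hn, sum_split H (fun i => (φ i)^2)]
    rfl
  have hsums : (∑ j : Fin H, (wp H φ j)^2) + (∑ j : Fin H, (bp H φ j)^2)
      + (∑ j : Fin H, (vp H φ j)^2) ≤ lyap H α φ := by
    unfold lyap
    nlinarith [sq_nonneg (cp H φ), sq_nonneg (cp H φ - 2*α)]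
  have hmul := mul_le_mul_of_nonneg_right hsums hL0
  nlinarith [hmul, h₁, h₂, h₃, hcb]

lemma lyap_nonneg (H : ℕ) (α : ℝ) (φ : EuclideanSpace ℝ (Fin (3*H+1))) :
    0 ≤ lyap H α φ := by
  unfold lyap
  positivity

lemma step_lemma (H : ℕ) (α : ℝ) (γ : ℝ) (hγ : 0 < γ)
    (φ : EuclideanSpace ℝ (Fin (3*H+1)))
    (hsm : γ * (lyap H α φ + 1) ≤ 1/2) :
    lyap H α (φ - γ • grad H α φ) - lyap H α φ ≤ -4 * γ * risk H α φ := by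
  have hcp : cp H (φ - γ • grad H α φ) = cp H φ - γ * grad H α φ ⟨3*H, by omega⟩ := by
    unfold cp
    simp [PiLp.sub_apply, PiLp.smul_apply, smul_eq_mul]
  have hnorm : ‖φ - γ • grad H α φ‖^2
      = ‖φ‖^2 - 2*(γ * (inner ℝ φ (grad H α φ) : ℝ)) + γ^2 * ‖grad H α φ‖^2 := by
    rw [norm_sub_sq_real, real_inner_smul_right, norm_smul, Real.norm_eq_abs, mul_pow, sq_abs]
  have hid := inner_grad H α φ
  have hbd := grad_bound H α φ
  have hr0 := risk_nonneg H α φ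
  have hbd2 : γ^2 * (‖grad H α φ‖^2 + (grad H α φ ⟨3*H, by omega⟩)^2)
      ≤ γ^2 * ((8 * lyap H α φ + 8) * risk H α φ) :=
    mul_le_mul_of_nonneg_left hbd (sq_nonneg γ)
  have h8 : 8 * (γ * risk H α φ) * (γ * (lyap H α φ + 1)) ≤ 8 * (γ * risk H α φ) * (1/2) :=
    mul_le_mul_of_nonneg_left hsm (by positivity)
  show lyap H α (φ - γ • grad H α φ) - lyap H α φ ≤ -4 * γ * risk H α φ
  unfold lyap
  rw [hcp, hnorm]
  nlinarith [hbd2, h8, hid]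

theorem gd_lyapunov_decreasing (H : ℕ) (hH : 0 < H) (α : ℝ)
    (γ : ℝ) (hγ : 0 < γ)
    (Θ : ℕ → EuclideanSpace ℝ (Fin (3*H+1)))
    (hrec : ∀ n : ℕ, Θ (n+1) = Θ n - γ • grad H α (Θ n))
    (hγsmall : γ ≤ (4 * lyap H α (Θ 0) + 2)⁻¹) :
    ∀ n : ℕ, lyap H α (Θ (n+1)) - lyap H α (Θ n) ≤ -4 * γ * risk H α (Θ n) ∧
      -4 * γ * risk H α (Θ n) ≤ 0 := by
  have hV0 : 0 ≤ lyap H α (Θ 0) := lyap_nonneg H α (Θ 0)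
  have hpos : (0:ℝ) < 4 * lyap H α (Θ 0) + 2 := by linarith
  have h1 : γ * (4 * lyap H α (Θ 0) + 2) ≤ 1 := by
    have h2 := mul_le_mul_of_nonneg_right hγsmall hpos.le
    rwa [inv_mul_cancel₀ (ne_of_gt hpos)] at h2
  have hsm : ∀ n, lyap H α (Θ n) ≤ lyap H α (Θ 0) → γ * (lyap H α (Θ n) + 1) ≤ 1/2 := by
    intro n hn
    have e1 := mul_le_mul_of_nonneg_left hn hγ.le
    have e2 := mul_nonneg hγ.le hV0
    nlinarith
  have mono : ∀ n, lyap H α (Θ n) ≤ lyap H α (Θ 0) := by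
    intro n
    induction n with
    | zero => exact le_refl _
    | succ n ih =>
      have hst := step_lemma H α γ hγ (Θ n) (hsm n ih)
      rw [← hrec n] at hst
      have := risk_nonneg H α (Θ n)
      nlinarith
  intro n
  have hst := step_lemma H α γ hγ (Θ n) (hsm n (mono n))
  rw [← hrec n] at hst
  refine ⟨hst, ?_⟩
  have := risk_nonneg H α (Θ n)
  nlinarith
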